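/- Let κ ≥ 0, ε > 0, h > 0, and let the step ratios satisfy 0 < r_k < 1 + √2 for 2 ≤ k ≤ n, with r_1 = 0. Let η ∈ (0,1) satisfy r_k²/(1+2r_k) < η for 2 ≤ k ≤ n, and suppose the step sizes satisfy τ_m ≤ ((1+2r_m)η − r_m²)/(η²(1+r_m)) · (1−η)/(κ + 4ε²h⁻²) for all 1 ≤ m ≤ n. Then for every constant λ ∈ [0,1] and every 1 ≤ k ≤ n, the linear operator v ↦ (d_{k−1}^{(n)} − d_k^{(n)} − κλη^k)·v + η^k ε² Δ_h v on periodic grid functions satisfies ‖(d_{k−1}^{(n)} − d_k^{(n)} − κλη^k)v + η^k ε² Δ_h v‖_∞ ≤ (d_{k−1}^{(n)} − d_k^{(n)} − κλη^k)·‖v‖_∞ for every periodic grid function v. -/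

import Mathlib

/-- Discrete Laplace operator on periodic grid functions. -/
noncomputable def lapH (M : ℕ) (h : ℝ) (v : ZMod M × ZMod M → ℝ) :
    ZMod M × ZMod M → ℝ :=
  fun p => (v (p.1 + 1, p.2) + v (p.1 - 1, p.2) + v (p.1, p.2 + 1) + v (p.1, p.2 - 1)
    - 4 * v p) / h ^ 2

/-- Discrete maximum norm of a periodic grid function. -/
noncomputable def maxNorm (M : ℕ) [NeZero M] (v : ZMod M × ZMod M → ℝ) : ℝ :=
  Finset.univ.sup' ⟨(0, 0), Finset.mem_univ _⟩ fun p => |v p|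

/-- Adjacent step ratio: r_k = τ_k/τ_{k−1} for k ≥ 2, and r_1 = 0. -/
noncomputable def ratio (τ : ℕ → ℝ) (k : ℕ) : ℝ :=
  if 2 ≤ k then τ k / τ (k - 1) else 0

/-- Variable-step BDF2 convolution kernels b_j^{(n)}. -/
noncomputable def bker (τ : ℕ → ℝ) (n j : ℕ) : ℝ :=
  if n = 1 then (if j = 0 then 1 / τ 1 else 0)
  else if j = 0 then (1 + 2 * ratio τ n) / (τ n * (1 + ratio τ n))
  else if j = 1 then -(ratio τ n) ^ 2 / (τ n * (1 + ratio τ n))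
  else 0

/-- Variable-step BDF2 operator D₂w^n = Σ_{k=1}^n b_{n−k}^{(n)}(w^k − w^{k−1}). -/
noncomputable def D2 (τ : ℕ → ℝ) (w : ℕ → ℝ) (n : ℕ) : ℝ :=
  ∑ k ∈ Finset.Icc 1 n, bker τ n (n - k) * (w k - w (k - 1))

/-- Recombined kernels d_k^{(n)}: d_0^{(n)} = b_0^{(n)},
d_k^{(n)} = η^{k−1}(b_0^{(n)}η + b_1^{(n)}) for k ≥ 1 (so d_1^{(1)} = η b_0^{(1)}). -/
noncomputable def dker (τ : ℕ → ℝ) (η : ℝ) (n k : ℕ) : ℝ :=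
  if k = 0 then bker τ n 0
  else η ^ (k - 1) * (bker τ n 0 * η + bker τ n 1)

set_option maxHeartbeats 1000000

/-- Lemma 3.2: under the ratio condition 0 < r_k < 1+√2, the kernel condition
r_k²/(1+2r_k) < η < 1, and the step-size restriction
τ_m ≤ ((1+2r_m)η − r_m²)/(η²(1+r_m)) · (1−η)/(κ + 4ε²h⁻²), for every λ ∈ [0,1]
and 1 ≤ k ≤ n the operator v ↦ (d_{k−1}^{(n)} − d_k^{(n)} − κλη^k)v + η^kε²Δ_h v
has maximum-norm bound d_{k−1}^{(n)} − d_k^{(n)} − κλη^k. -/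
theorem stmt7 (M : ℕ) [NeZero M] (hM : 1 ≤ M) (h ε κ : ℝ)
    (hh : 0 < h) (hε : 0 < ε) (hκ : 0 ≤ κ)
    (n : ℕ) (hn : 1 ≤ n) (τ : ℕ → ℝ) (hτ : ∀ m, 1 ≤ m → m ≤ n → 0 < τ m)
    (hr : ∀ k, 2 ≤ k → k ≤ n → 0 < ratio τ k ∧ ratio τ k < 1 + Real.sqrt 2)
    (η : ℝ) (hη0 : 0 < η) (hη1 : η < 1)
    (hηr : ∀ k, 2 ≤ k → k ≤ n → (ratio τ k) ^ 2 / (1 + 2 * ratio τ k) < η)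
    (hstep : ∀ m, 1 ≤ m → m ≤ n →
      τ m ≤ ((1 + 2 * ratio τ m) * η - (ratio τ m) ^ 2) / (η ^ 2 * (1 + ratio τ m))
        * (1 - η) / (κ + 4 * ε ^ 2 / h ^ 2)) :
    ∀ lam : ℝ, 0 ≤ lam → lam ≤ 1 → ∀ k, 1 ≤ k → k ≤ n →
      ∀ v : ZMod M × ZMod M → ℝ,
        maxNorm M (fun p =>
            (dker τ η n (k - 1) - dker τ η n k - κ * lam * η ^ k) * v p
              + η ^ k * ε ^ 2 * lapH M h v p) ≤
          (dker τ η n (k - 1) - dker τ η n k - κ * lam * η ^ k) * maxNorm M v := by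
  intro lam hlam0 hlam1 k hk1 hkn v
  have hh2 : (0:ℝ) < h ^ 2 := by positivity
  have hK : (0:ℝ) < κ + 4 * ε ^ 2 / h ^ 2 := by positivity
  have hτn : 0 < τ n := hτ n hn le_rfl
  have hstepn := hstep n hn le_rfl
  -- key gap inequality
  have key : η ^ k * (κ + 4 * ε ^ 2 / h ^ 2) ≤ dker τ η n (k - 1) - dker τ η n k := by
    rcases eq_or_lt_of_le hn with hn1 | hn2
    · -- n = 1 hence k = 1
      have hk : k = 1 := by omega
      subst hk
      have hne : n = 1 := hn1.symm
      subst hne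
      have hr1 : ratio τ 1 = 0 := by simp [ratio]
      rw [hr1] at hstepn
      have hst : τ 1 * (κ + 4 * ε ^ 2 / h ^ 2) ≤
          ((1 + 2 * 0) * η - 0 ^ 2) / (η ^ 2 * (1 + 0)) * (1 - η) :=
        (le_div_iff₀ hK).mp hstepn
      have hst' : τ 1 * (κ + 4 * ε ^ 2 / h ^ 2) * η ≤ 1 - η := by
        have he : ((1 + 2 * 0) * η - 0 ^ 2) / (η ^ 2 * (1 + 0)) * (1 - η) = (1 - η) / η := by
          field_simp
          ring
        rw [he] at hst
        rw [← le_div_iff₀ hη0]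
        calc τ 1 * (κ + 4 * ε ^ 2 / h ^ 2) ≤ (1 - η) / η := hst
          _ = (1 - η) / η := rfl
      have hd0 : dker τ η 1 0 = 1 / τ 1 := by simp [dker, bker]
      have hd1 : dker τ η 1 1 = η / τ 1 := by
        simp [dker, bker]
        ring
      rw [hd0, hd1]
      rw [show 1 / τ 1 - η / τ 1 = (1 - η) / τ 1 by ring, le_div_iff₀ hτn]
      calc η ^ 1 * (κ + 4 * ε ^ 2 / h ^ 2) * τ 1
          = τ 1 * (κ + 4 * ε ^ 2 / h ^ 2) * η := by ring
        _ ≤ 1 - η := hst'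
    · -- n ≥ 2
      have hnne : n ≠ 1 := by omega
      set r := ratio τ n with hrdef
      obtain ⟨hr0, hrub⟩ := hr n (by omega) le_rfl
      have hb0 : bker τ n 0 = (1 + 2 * r) / (τ n * (1 + r)) := by
        simp [bker, hnne, hrdef]
      have hb1 : bker τ n 1 = -(r ^ 2) / (τ n * (1 + r)) := by
        simp [bker, hnne, hrdef]
      have h1r : (0:ℝ) < 1 + r := by linarith
      have h12r : (0:ℝ) < 1 + 2 * r := by linarith
      have hP : 0 < (1 + 2 * r) * η - r ^ 2 := by
        have hq := hηr n (by omega) le_rfl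
        rw [div_lt_iff₀ h12r] at hq
        nlinarith
      have hst' : τ n * (κ + 4 * ε ^ 2 / h ^ 2) * (η ^ 2 * (1 + r)) ≤
          ((1 + 2 * r) * η - r ^ 2) * (1 - η) := by
        have hst := (le_div_iff₀ hK).mp hstepn
        rw [div_mul_eq_mul_div, le_div_iff₀ (by positivity : (0:ℝ) < η ^ 2 * (1 + r))] at hst
        linarith
      have hB : bker τ n 0 * η + bker τ n 1 =
          ((1 + 2 * r) * η - r ^ 2) / (τ n * (1 + r)) := by
        rw [hb0, hb1]
        field_simp
        ring
      have hbase : η ^ 2 * (κ + 4 * ε ^ 2 / h ^ 2) ≤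
          (1 - η) * (bker τ n 0 * η + bker τ n 1) := by
        rw [hB, show (1 - η) * (((1 + 2 * r) * η - r ^ 2) / (τ n * (1 + r))) =
          (1 - η) * ((1 + 2 * r) * η - r ^ 2) / (τ n * (1 + r)) from
            (mul_div_assoc _ _ _).symm,
          le_div_iff₀ (by positivity : (0:ℝ) < τ n * (1 + r))]
        nlinarith [hst']
      rcases eq_or_lt_of_le hk1 with hk | hk2
      · -- k = 1
        have hk' : k = 1 := hk.symm
        subst hk'
        have hd0 : dker τ η n 0 = bker τ n 0 := by simp [dker]
        have hd1 : dker τ η n 1 = bker τ n 0 * η + bker τ n 1 := by simp [dker]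
        rw [hd0, hd1, hb0, hb1]
        rw [show (1 + 2 * r) / (τ n * (1 + r)) -
            ((1 + 2 * r) / (τ n * (1 + r)) * η + -(r ^ 2) / (τ n * (1 + r))) =
            ((1 + 2 * r) * (1 - η) + r ^ 2) / (τ n * (1 + r)) by field_simp; ring]
        rw [le_div_iff₀ (by positivity : (0:ℝ) < τ n * (1 + r))]
        have hmul : η * (η ^ 1 * (κ + 4 * ε ^ 2 / h ^ 2) * (τ n * (1 + r))) ≤
            η * ((1 + 2 * r) * (1 - η) + r ^ 2) := by
          nlinarith [hst', sq_nonneg r]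
        exact le_of_mul_le_mul_left hmul hη0
      · -- k ≥ 2
        have hk2' : 2 ≤ k := hk2
        have hd1 : dker τ η n (k - 1) = η ^ (k - 2) * (bker τ n 0 * η + bker τ n 1) := by
          simp only [dker, show k - 1 ≠ 0 by omega, if_false, show k - 1 - 1 = k - 2 by omega]
        have hd2 : dker τ η n k = η ^ (k - 2) * η * (bker τ n 0 * η + bker τ n 1) := by
          simp only [dker, show k ≠ 0 by omega, if_false]
          rw [show k - 1 = (k - 2) + 1 by omega, pow_succ]
        have hpk : η ^ k = η ^ (k - 2) * η ^ 2 := by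
          rw [← pow_add]
          congr 1
          omega
        rw [hd1, hd2, hpk]
        calc η ^ (k - 2) * η ^ 2 * (κ + 4 * ε ^ 2 / h ^ 2)
            = η ^ (k - 2) * (η ^ 2 * (κ + 4 * ε ^ 2 / h ^ 2)) := by ring
          _ ≤ η ^ (k - 2) * ((1 - η) * (bker τ n 0 * η + bker τ n 1)) := by
              exact mul_le_mul_of_nonneg_left hbase (by positivity)
          _ = η ^ (k - 2) * (bker τ n 0 * η + bker τ n 1)
              - η ^ (k - 2) * η * (bker τ n 0 * η + bker τ n 1) := by ring
  -- main part
  set c := dker τ η n (k - 1) - dker τ η n k - κ * lam * η ^ k with hcdef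
  set a := η ^ k * ε ^ 2 with hadef
  have ha0 : 0 < a := by positivity
  have hηk : (0:ℝ) < η ^ k := by positivity
  have hc4 : 4 * a / h ^ 2 ≤ c := by
    have h1 : κ * lam * η ^ k ≤ κ * η ^ k :=
      mul_le_mul_of_nonneg_right (mul_le_of_le_one_right hκ hlam1) hηk.le
    have h2 : η ^ k * (κ + 4 * ε ^ 2 / h ^ 2) = κ * η ^ k + 4 * a / h ^ 2 := by
      rw [hadef]; ring
    rw [h2] at key
    rw [hcdef]
    linarith
  have haq : (0:ℝ) ≤ a / h ^ 2 := by positivity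
  set N := maxNorm M v with hNdef
  have hN : ∀ q, |v q| ≤ N := by
    intro q
    rw [hNdef]
    unfold maxNorm
    exact Finset.le_sup' (fun p : ZMod M × ZMod M => |v p|) (Finset.mem_univ q)
  have hN0 : 0 ≤ N := le_trans (abs_nonneg _) (hN (0, 0))
  unfold maxNorm
  refine Finset.sup'_le _ _ ?_
  intro p _
  show |c * v p + a * lapH M h v p| ≤ c * N
  have hid : c * v p + a * lapH M h v p =
      (c - 4 * a / h ^ 2) * v p + a / h ^ 2 * v (p.1 + 1, p.2) + a / h ^ 2 * v (p.1 - 1, p.2)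
        + a / h ^ 2 * v (p.1, p.2 + 1) + a / h ^ 2 * v (p.1, p.2 - 1) := by
    rw [hadef]
    unfold lapH
    field_simp
    ring
  rw [hid]
  have t0 : |(c - 4 * a / h ^ 2) * v p| ≤ (c - 4 * a / h ^ 2) * N := by
    rw [abs_mul, abs_of_nonneg (by linarith : (0:ℝ) ≤ c - 4 * a / h ^ 2)]
    exact mul_le_mul_of_nonneg_left (hN p) (by linarith)
  have tg : ∀ q : ZMod M × ZMod M, |a / h ^ 2 * v q| ≤ a / h ^ 2 * N := by
    intro q
    rw [abs_mul, abs_of_nonneg haq]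
    exact mul_le_mul_of_nonneg_left (hN q) haq
  have habs : |(c - 4 * a / h ^ 2) * v p + a / h ^ 2 * v (p.1 + 1, p.2)
      + a / h ^ 2 * v (p.1 - 1, p.2) + a / h ^ 2 * v (p.1, p.2 + 1)
      + a / h ^ 2 * v (p.1, p.2 - 1)| ≤
      |(c - 4 * a / h ^ 2) * v p| + |a / h ^ 2 * v (p.1 + 1, p.2)|
      + |a / h ^ 2 * v (p.1 - 1, p.2)| + |a / h ^ 2 * v (p.1, p.2 + 1)|
      + |a / h ^ 2 * v (p.1, p.2 - 1)| := by
    calc _ ≤ |(c - 4 * a / h ^ 2) * v p + a / h ^ 2 * v (p.1 + 1, p.2)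
          + a / h ^ 2 * v (p.1 - 1, p.2) + a / h ^ 2 * v (p.1, p.2 + 1)|
          + |a / h ^ 2 * v (p.1, p.2 - 1)| := abs_add_le _ _
      _ ≤ |(c - 4 * a / h ^ 2) * v p + a / h ^ 2 * v (p.1 + 1, p.2)
          + a / h ^ 2 * v (p.1 - 1, p.2)| + |a / h ^ 2 * v (p.1, p.2 + 1)|
          + |a / h ^ 2 * v (p.1, p.2 - 1)| := by
            gcongr
            exact abs_add_le _ _
      _ ≤ |(c - 4 * a / h ^ 2) * v p + a / h ^ 2 * v (p.1 + 1, p.2)|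
          + |a / h ^ 2 * v (p.1 - 1, p.2)| + |a / h ^ 2 * v (p.1, p.2 + 1)|
          + |a / h ^ 2 * v (p.1, p.2 - 1)| := by
            gcongr
            exact abs_add_le _ _
      _ ≤ _ := by
            gcongr
            exact abs_add_le _ _
  have hfinal : (c - 4 * a / h ^ 2) * N + a / h ^ 2 * N + a / h ^ 2 * N + a / h ^ 2 * N
      + a / h ^ 2 * N = c * N := by ring
  calc |(c - 4 * a / h ^ 2) * v p + a / h ^ 2 * v (p.1 + 1, p.2)
      + a / h ^ 2 * v (p.1 - 1, p.2) + a / h ^ 2 * v (p.1, p.2 + 1)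
      + a / h ^ 2 * v (p.1, p.2 - 1)| ≤ _ := habs
    _ ≤ (c - 4 * a / h ^ 2) * N + a / h ^ 2 * N + a / h ^ 2 * N + a / h ^ 2 * N
      + a / h ^ 2 * N := by
        gcongr <;> first | exact t0 | exact tg _
    _ = c * N := hfinal
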